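/- The stable tropical solution lies on each tropical hyperplane: for an n×(n+1) real matrix O, the point p = (|O^1|_t, …, |O^{n+1}|_t) satisfies, for each row u, that the maximum max_{1 ≤ l ≤ n+1} (o_{u,l} + |O^l|_t) is attained for at least two distinct indices l. -/

import Mathlib

/-- Tropicalization map on the field of (generalized) Puiseux series
`HahnSeries ℝ ℂ`: `T x = - ord x`. -/
noncomputable def T (x : HahnSeries ℝ ℂ) : ℝ := -x.order

/-- Principal coefficient: the coefficient of the lowest-order term. -/
noncomputable def Pc (x : HahnSeries ℝ ℂ) : ℂ := x.coeff x.order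

/-- Tropical determinant of a real square matrix. -/
noncomputable def tropDet {n : ℕ} (O : Matrix (Fin n) (Fin n) ℝ) : ℝ :=
  Finset.univ.sup' Finset.univ_nonempty (fun σ : Equiv.Perm (Fin n) => ∑ i, O i (σ i))

/-- Pseudo-determinant of `A` with respect to the tropical matrix `O`. -/
noncomputable def pseudoDet {n : ℕ} {R : Type*} [CommRing R]
    (O : Matrix (Fin n) (Fin n) ℝ) (A : Matrix (Fin n) (Fin n) R) : R :=
  ∑ σ ∈ Finset.univ.filter
      (fun σ : Equiv.Perm (Fin n) => ∑ i, O i (σ i) = tropDet O),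
    (Equiv.Perm.sign σ : ℤ) • ∏ i, A i (σ i)

theorem stable_solution_on_hyperplanes {n : ℕ} (O : Matrix (Fin n) (Fin (n + 1)) ℝ)
    (p : Fin (n + 1) → ℝ)
    (hp : ∀ l : Fin (n + 1), p l = tropDet (O.submatrix id l.succAbove)) :
    ∀ u : Fin n, ∃ l m : Fin (n + 1), l ≠ m ∧
      O u l + p l = O u m + p m ∧
      ∀ j : Fin (n + 1), O u j + p j ≤ O u l + p l := by
  intro u
  classical
  set S : Equiv.Perm (Fin (n + 1)) → ℝ :=
    fun σ => (∑ i : Fin n, O i (σ i.castSucc)) + O u (σ (Fin.last n)) with hS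
  set M : ℝ := Finset.univ.sup' Finset.univ_nonempty S with hM
  -- Lemma A : every column value is ≤ M
  have lemA : ∀ l : Fin (n + 1), O u l + p l ≤ M := by
    intro l
    rw [hp l]
    obtain ⟨π, -, hπ⟩ := Finset.exists_mem_eq_sup' (Finset.univ_nonempty)
      (fun π : Equiv.Perm (Fin n) => ∑ i, (O.submatrix id l.succAbove) i (π i))
    have htd : tropDet (O.submatrix id l.succAbove)
        = ∑ i, O i (l.succAbove (π i)) := by
      simpa [tropDet, Matrix.submatrix_apply] using hπ
    rw [htd]
    -- build the permutation of Fin (n+1)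
    set f : Fin (n + 1) → Fin (n + 1) :=
      Fin.lastCases l (fun i => l.succAbove (π i)) with hf
    have hfl : f (Fin.last n) = l := by simp [hf]
    have hfc : ∀ i : Fin n, f i.castSucc = l.succAbove (π i) := by
      intro i; simp [hf]
    have hinj : Function.Injective f := by
      intro a b hab
      induction a using Fin.lastCases with
      | last =>
        induction b using Fin.lastCases with
        | last => rfl
        | cast j =>
          rw [hfl, hfc] at hab
          exact absurd hab.symm (Fin.succAbove_ne l (π j))
      | cast i =>
        induction b using Fin.lastCases with
        | last =>
          rw [hfl, hfc] at hab
          exact absurd hab (Fin.succAbove_ne l (π i))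
        | cast j =>
          rw [hfc, hfc] at hab
          have := π.injective (Fin.succAbove_right_injective hab)
          rw [this]
    let σ : Equiv.Perm (Fin (n + 1)) :=
      Equiv.ofBijective f (Finite.injective_iff_bijective.mp hinj)
    have hval : S σ = O u l + ∑ i, O i (l.succAbove (π i)) := by
      have : (∑ i : Fin n, O i (σ i.castSucc)) = ∑ i, O i (l.succAbove (π i)) := by
        refine Finset.sum_congr rfl fun i _ => ?_
        have : σ i.castSucc = l.succAbove (π i) := hfc i
        rw [this]
      have h2 : σ (Fin.last n) = l := hfl
      rw [hS]; dsimp only; rw [this, h2]; ring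
    calc O u l + ∑ i, O i (l.succAbove (π i)) = S σ := hval.symm
      _ ≤ M := Finset.le_sup' S (Finset.mem_univ σ)
  -- Lemma B : S σ ≤ the column value at σ (last)
  have lemB : ∀ σ : Equiv.Perm (Fin (n + 1)),
      S σ ≤ O u (σ (Fin.last n)) + p (σ (Fin.last n)) := by
    intro σ
    set l := σ (Fin.last n) with hl
    have hne : ∀ i : Fin n, σ i.castSucc ≠ l := by
      intro i h
      exact absurd (σ.injective h) (Fin.ne_last_of_lt (Fin.castSucc_lt_last i))
    have hex : ∀ i : Fin n, ∃ j : Fin n, l.succAbove j = σ i.castSucc := by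
      intro i; exact Fin.exists_succAbove_eq (hne i)
    choose g hg using hex
    have hginj : Function.Injective g := by
      intro a b hab
      have : σ a.castSucc = σ b.castSucc := by rw [← hg a, ← hg b, hab]
      exact Fin.castSucc_injective n (σ.injective this)
    let π : Equiv.Perm (Fin n) :=
      Equiv.ofBijective g (Finite.injective_iff_bijective.mp hginj)
    have hsum : (∑ i : Fin n, O i (σ i.castSucc)) ≤ p l := by
      rw [hp l]
      have : (∑ i : Fin n, O i (σ i.castSucc))
          = ∑ i, (O.submatrix id l.succAbove) i (π i) := by
        refine Finset.sum_congr rfl fun i _ => ?_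
        simp only [Matrix.submatrix_apply, id]
        rw [show (π i : Fin n) = g i from rfl, hg i]
      rw [this]
      exact Finset.le_sup'
        (fun π : Equiv.Perm (Fin n) => ∑ i, (O.submatrix id l.succAbove) i (π i))
        (Finset.mem_univ π)
    rw [hS]
    dsimp only
    rw [← hl]
    linarith
  -- choose a maximizer
  obtain ⟨σ₀, -, hσ₀⟩ := Finset.exists_mem_eq_sup' (Finset.univ_nonempty : (Finset.univ : Finset (Equiv.Perm (Fin (n+1)))).Nonempty) S
  set l := σ₀ (Fin.last n) with hldef
  set m := σ₀ u.castSucc with hmdef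
  have hlm : l ≠ m := by
    intro h
    have := σ₀.injective h
    exact absurd this.symm (Fin.ne_last_of_lt (Fin.castSucc_lt_last u))
  set σ₁ : Equiv.Perm (Fin (n + 1)) :=
    σ₀ * Equiv.swap u.castSucc (Fin.last n) with hσ₁
  have hcu : u.castSucc ≠ Fin.last n := Fin.ne_last_of_lt (Fin.castSucc_lt_last u)
  have hσ₁last : σ₁ (Fin.last n) = m := by
    rw [hσ₁]; simp [Equiv.swap_apply_right, hmdef]
  have hσ₁u : σ₁ u.castSucc = l := by
    rw [hσ₁]; simp [Equiv.swap_apply_left, hldef]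
  have hσ₁i : ∀ i : Fin n, i ≠ u → σ₁ i.castSucc = σ₀ i.castSucc := by
    intro i hi
    rw [hσ₁]
    simp only [Equiv.Perm.mul_apply]
    rw [Equiv.swap_apply_of_ne_of_ne]
    · exact fun h => hi (Fin.castSucc_injective n h)
    · exact Fin.ne_last_of_lt (Fin.castSucc_lt_last i)
  -- S σ₁ = S σ₀
  have hSeq : S σ₁ = S σ₀ := by
    rw [hS]
    dsimp only
    rw [← Finset.sum_erase_add (Finset.univ) (fun i : Fin n => O i (σ₁ i.castSucc)) (Finset.mem_univ u),
        ← Finset.sum_erase_add (Finset.univ) (fun i : Fin n => O i (σ₀ i.castSucc)) (Finset.mem_univ u)]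
    have he : (∑ i ∈ Finset.univ.erase u, O i (σ₁ i.castSucc))
        = ∑ i ∈ Finset.univ.erase u, O i (σ₀ i.castSucc) := by
      refine Finset.sum_congr rfl fun i hi => ?_
      rw [hσ₁i i (Finset.ne_of_mem_erase hi)]
    rw [he, hσ₁u, hσ₁last, ← hldef, ← hmdef]
    ring
  -- conclude
  have hMσ₀ : M = S σ₀ := hσ₀
  have hlt : O u l + p l = M := by
    have h1 : M ≤ O u l + p l := by rw [hMσ₀]; exact lemB σ₀
    exact le_antisymm (lemA l) h1
  have hmt : O u m + p m = M := by
    have h1 : M ≤ O u m + p m := by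
      rw [hMσ₀, ← hSeq]
      have := lemB σ₁
      rwa [hσ₁last] at this
    exact le_antisymm (lemA m) h1
  exact ⟨l, m, hlm, by rw [hlt, hmt], fun j => by rw [hlt]; exact lemA j⟩
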